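/- Let I ⊆ ℝ be an open interval, f : I → ℝ positive and differentiable, and a > 0, c₂ ≠ 0, H₀ real constants with 4H₀² + a²c₂² = a². Define φ : I × ℝ → ℝ⁴ by φ(u,v) = (u, sin(a v)/(a f(u)), cos(a v)/(a f(u)), 2H₀/(a² c₂ f(u))). Then, with respect to the Robertson–Walker metric which at a point with first coordinate t assigns to tangent vectors X, Y the value ⟨X,Y⟩ = −X₁Y₁ + f(t)²(X₂Y₂ + X₃Y₃ + X₄Y₄), the partial derivatives of φ satisfy at every (u,v): ⟨∂φ/∂v, ∂φ/∂v⟩ = 1, ⟨∂φ/∂u, ∂φ/∂v⟩ = 0, and ⟨∂φ/∂u, ∂φ/∂u⟩ = (f'(u)² − a²c₂²f(u)²)/(a²c₂²f(u)²). In particular, φ is space-like at u precisely when f'(u)² > a²c₂²f(u)². -/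

import Mathlib

open Real

/-- The Robertson–Walker metric of `L⁴₁(f,0)` at a point with first coordinate `t`:
`⟨X,Y⟩ = -X₁Y₁ + f(t)²(X₂Y₂ + X₃Y₃ + X₄Y₄)`. -/
noncomputable def rwMetric4 (f : ℝ → ℝ) (t : ℝ) (X Y : Fin 4 → ℝ) : ℝ :=
  -(X 0 * Y 0) + f t ^ 2 * (X 1 * Y 1 + X 2 * Y 2 + X 3 * Y 3)

/-- The rotational surface of Theorem 4.1 in `L⁴₁(f,0)`. -/
noncomputable def phiRW4 (f : ℝ → ℝ) (a c₂ H₀ : ℝ) (u v : ℝ) : Fin 4 → ℝ :=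
  ![u,
    Real.sin (a * v) / (a * f u),
    Real.cos (a * v) / (a * f u),
    2 * H₀ / (a ^ 2 * c₂ * f u)]


lemma deriv_sin_mul (a v : ℝ) (c : ℝ) :
    deriv (fun v' => Real.sin (a * v') / c) v = a * Real.cos (a * v) / c := by
  have h : HasDerivAt (fun v' => Real.sin (a * v') / c) (a * Real.cos (a * v) / c) v := by
    have h1 : HasDerivAt (fun v' => a * v') a v := by
      simpa using (hasDerivAt_id v).const_mul a
    have := (Real.hasDerivAt_sin (a * v)).comp v h1
    simpa [mul_comm] using this.div_const c
  exact h.deriv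

lemma deriv_cos_mul (a v : ℝ) (c : ℝ) :
    deriv (fun v' => Real.cos (a * v') / c) v = -(a * Real.sin (a * v)) / c := by
  have h1 : HasDerivAt (fun v' => a * v') a v := by
    simpa using (hasDerivAt_id v).const_mul a
  have := (Real.hasDerivAt_cos (a * v)).comp v h1
  have h2 := (this.div_const c).deriv
  simp only [Function.comp_def] at h2
  rw [h2]; ring

lemma deriv_const_div_mulfun (f : ℝ → ℝ) (u : ℝ) (hf : DifferentiableAt ℝ f u)
    (c b : ℝ) (hb : b * f u ≠ 0) :
    deriv (fun u' => c / (b * f u')) u = -(c * (b * deriv f u)) / (b * f u) ^ 2 := by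
  have h1 : HasDerivAt (fun u' => b * f u') (b * deriv f u) u :=
    (hf.hasDerivAt).const_mul b
  have := (hasDerivAt_const u c).div h1 hb
  simpa [Pi.div_def] using this.deriv


/-- First fundamental form of the rotational surface `φ` in `L⁴₁(f,0)`:
`⟨φ_v,φ_v⟩ = 1`, `⟨φ_u,φ_v⟩ = 0` and
`⟨φ_u,φ_u⟩ = (f'² - a²c₂²f²)/(a²c₂²f²)`; in particular `φ` is space-like at `u`
precisely when `f'(u)² > a²c₂²f(u)²`. -/
theorem phiRW4_first_fundamental_form (A B : ℝ) (f : ℝ → ℝ) (a c₂ H₀ : ℝ)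
    (ha : 0 < a) (hc₂ : c₂ ≠ 0)
    (hrel : 4 * H₀ ^ 2 + a ^ 2 * c₂ ^ 2 = a ^ 2)
    (hfpos : ∀ u ∈ Set.Ioo A B, 0 < f u)
    (hfdiff : ∀ u ∈ Set.Ioo A B, DifferentiableAt ℝ f u) :
    ∀ u ∈ Set.Ioo A B, ∀ v : ℝ,
      rwMetric4 f u (fun i => deriv (fun v' => phiRW4 f a c₂ H₀ u v' i) v)
        (fun i => deriv (fun v' => phiRW4 f a c₂ H₀ u v' i) v) = 1 ∧
      rwMetric4 f u (fun i => deriv (fun u' => phiRW4 f a c₂ H₀ u' v i) u)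
        (fun i => deriv (fun v' => phiRW4 f a c₂ H₀ u v' i) v) = 0 ∧
      rwMetric4 f u (fun i => deriv (fun u' => phiRW4 f a c₂ H₀ u' v i) u)
        (fun i => deriv (fun u' => phiRW4 f a c₂ H₀ u' v i) u) =
        (deriv f u ^ 2 - a ^ 2 * c₂ ^ 2 * f u ^ 2) / (a ^ 2 * c₂ ^ 2 * f u ^ 2) ∧
      (0 < rwMetric4 f u (fun i => deriv (fun u' => phiRW4 f a c₂ H₀ u' v i) u)
        (fun i => deriv (fun u' => phiRW4 f a c₂ H₀ u' v i) u) ↔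
        deriv f u ^ 2 > a ^ 2 * c₂ ^ 2 * f u ^ 2) := by
  intro u hu v
  have hf := hfdiff u hu
  have hfp := hfpos u hu
  have hfne : f u ≠ 0 := hfp.ne'
  have hane : a ≠ 0 := ha.ne'
  have h1 : a * f u ≠ 0 := mul_ne_zero hane hfne
  have h2 : a ^ 2 * c₂ * f u ≠ 0 := mul_ne_zero (mul_ne_zero (pow_ne_zero 2 hane) hc₂) hfne
  have hsc := Real.sin_sq_add_cos_sq (a * v)
  have d1v := deriv_sin_mul a v (a * f u)
  have d2v := deriv_cos_mul a v (a * f u)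
  have d1u := deriv_const_div_mulfun f u hf (Real.sin (a * v)) a h1
  have d2u := deriv_const_div_mulfun f u hf (Real.cos (a * v)) a h1
  have d3u := deriv_const_div_mulfun f u hf (2 * H₀) (a ^ 2 * c₂) h2
  have hq : 0 < a ^ 2 * c₂ ^ 2 * f u ^ 2 := by positivity
  simp only [rwMetric4, phiRW4, Matrix.cons_val_zero, Matrix.cons_val_one, Matrix.head_cons,
    Matrix.cons_val_two, Matrix.tail_cons, Matrix.cons_val_three, deriv_const, deriv_id'',
    d1v, d2v, d1u, d2u, d3u]
  have h4 : (4:ℝ) * H₀ ^ 2 = a ^ 2 - a ^ 2 * c₂ ^ 2 := by linarith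
  have key : -(1 * 1) + f u ^ 2 *
      (-(Real.sin (a * v) * (a * deriv f u)) / (a * f u) ^ 2 *
        (-(Real.sin (a * v) * (a * deriv f u)) / (a * f u) ^ 2) +
       -(Real.cos (a * v) * (a * deriv f u)) / (a * f u) ^ 2 *
        (-(Real.cos (a * v) * (a * deriv f u)) / (a * f u) ^ 2) +
       -(2 * H₀ * (a ^ 2 * c₂ * deriv f u)) / (a ^ 2 * c₂ * f u) ^ 2 *
        (-(2 * H₀ * (a ^ 2 * c₂ * deriv f u)) / (a ^ 2 * c₂ * f u) ^ 2)) =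
      (deriv f u ^ 2 - a ^ 2 * c₂ ^ 2 * f u ^ 2) / (a ^ 2 * c₂ ^ 2 * f u ^ 2) := by
    calc _ = -1 + (Real.sin (a * v) ^ 2 + Real.cos (a * v) ^ 2) *
              (deriv f u ^ 2 / (a ^ 2 * f u ^ 2)) +
            4 * H₀ ^ 2 * (deriv f u ^ 2 / (a ^ 4 * c₂ ^ 2 * f u ^ 2)) := by
          field_simp
          linear_combination
      _ = -1 + deriv f u ^ 2 / (a ^ 2 * f u ^ 2) +
            (a ^ 2 - a ^ 2 * c₂ ^ 2) * (deriv f u ^ 2 / (a ^ 4 * c₂ ^ 2 * f u ^ 2)) := by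
          rw [hsc, h4]; ring
      _ = (deriv f u ^ 2 - a ^ 2 * c₂ ^ 2 * f u ^ 2) / (a ^ 2 * c₂ ^ 2 * f u ^ 2) := by
          field_simp
          ring
  refine ⟨?_, ?_, ?_, ?_⟩
  · field_simp
    linear_combination hsc
  · ring
  · exact key
  · rw [key, lt_div_iff₀ hq, zero_mul, sub_pos]
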